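/- Let D = (d_{ij}) be an m×m monotone, irreducible matrix, and suppose w_1,...,w_m : T^N → ℝ satisfy |w_1(x)| ≤ M for all x and |∑_{j=2}^m d_{ij}(x) w_j(x)| ≤ C for all i = 1,...,m and x (where d_{ij}(x) are continuous in x, with the monotone and irreducible structure holding for each x, and d_{11}(x) ≥ δ₀ > 0 uniformly). Then there exists a constant C' depending only on C, δ₀, m, and the positive left null vector Λ(x) such that min_{j ≥ 2} |w_j(x)| ≤ C' for all x. -/

import Mathlib

open Matrix Finset

/-- Maximum principle: if `u z = 0` and the rows `i ≠ z` of `A` annihilate `u`,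
with `A` monotone irreducible, then `u ≤ 0`. -/
lemma maxprin {m : ℕ} (A : Matrix (Fin m) (Fin m) ℝ)
    (hoff : ∀ i j : Fin m, i ≠ j → A i j ≤ 0)
    (hrow : ∀ i, ∑ j, A i j = 0)
    (hirr : ∀ I : Finset (Fin m), I.Nonempty → I ≠ Finset.univ →
      ∃ i ∈ I, ∃ j, j ∉ I ∧ A i j ≠ 0)
    (z : Fin m) (u : Fin m → ℝ) (hu0 : u z = 0)
    (heq : ∀ i, i ≠ z → ∑ k, A i k * u k = 0) :
    ∀ j, u j ≤ 0 := by
  by_contra h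
  push_neg at h
  obtain ⟨j0, hj0⟩ := h
  have hne : (Finset.univ : Finset (Fin m)).Nonempty := ⟨j0, mem_univ _⟩
  obtain ⟨jT, -, hjT⟩ := Finset.exists_max_image Finset.univ u hne
  set T := u jT with hT
  have hTpos : 0 < T := lt_of_lt_of_le hj0 (hjT j0 (mem_univ _))
  set I : Finset (Fin m) := Finset.univ.filter (fun j => u j = T) with hI
  have hIne : I.Nonempty := ⟨jT, by simp [hI, hT]⟩
  have hzI : z ∉ I := by
    simp only [hI, mem_filter]
    rintro ⟨-, hz⟩
    rw [hu0] at hz; linarith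
  have hIuniv : I ≠ Finset.univ := fun h => hzI (h ▸ mem_univ z)
  obtain ⟨i, hiI, j, hjI, hAij⟩ := hirr I hIne hIuniv
  have hiz : i ≠ z := fun h => hzI (h ▸ hiI)
  have hij : i ≠ j := fun h => hjI (h ▸ hiI)
  have huiT : u i = T := (mem_filter.mp hiI).2
  have hujT : u j ≠ T := fun h => hjI (mem_filter.mpr ⟨mem_univ _, h⟩)
  have hujlt : u j < T := lt_of_le_of_ne (hjT j (mem_univ _)) hujT
  have key : ∑ k, A i k * u k = ∑ k, A i k * (u k - T) := by
    simp only [mul_sub]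
    rw [Finset.sum_sub_distrib, ← Finset.sum_mul, hrow i, zero_mul, sub_zero]
  have hpos : 0 < ∑ k, A i k * (u k - T) := by
    refine Finset.sum_pos' (fun k _ => ?_) ⟨j, mem_univ _, ?_⟩
    · rcases eq_or_ne i k with rfl | hik
      · rw [huiT, sub_self, mul_zero]
      · nlinarith [hoff i k hik, hjT k (mem_univ k)]
    · have h1 : A i j < 0 := lt_of_le_of_ne (hoff i j hij) hAij
      have h2 : u j - T < 0 := by linarith
      exact mul_pos_of_neg_of_neg h1 h2
  rw [← key, heq i hiz] at hpos
  exact lt_irrefl 0 hpos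


/-- Uniform bound in the ergodic approximation: if |w₁| ≤ M and
|∑_{j≥2} d_{ij}(x) w_j(x)| ≤ C for all i, with a continuous monotone irreducible
x-dependent coupling, a continuous positive left null vector Λ(x) and d₁₁(x) ≥ δ₀ > 0,
then min_{j≥2} |w_j(x)| is uniformly bounded. -/
theorem stmt_19 {X : Type*} [MetricSpace X] [CompactSpace X]
    (m : ℕ) (hm : 2 ≤ m)
    (D : X → Matrix (Fin m) (Fin m) ℝ)
    (hDcont : ∀ i j, Continuous fun x => D x i j)
    (hdiag : ∀ x i, 0 ≤ D x i i)
    (hoff : ∀ x, ∀ i j : Fin m, i ≠ j → D x i j ≤ 0)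
    (hrow : ∀ x i, ∑ j, D x i j = 0)
    (hirr : ∀ x, ∀ I : Finset (Fin m), I.Nonempty → I ≠ Finset.univ →
      ∃ i ∈ I, ∃ j, j ∉ I ∧ D x i j ≠ 0)
    (Λ : X → Fin m → ℝ) (hΛcont : ∀ i, Continuous fun x => Λ x i)
    (hΛpos : ∀ x i, 0 < Λ x i) (hΛ : ∀ x, (D x).transpose.mulVec (Λ x) = 0)
    (δ₀ : ℝ) (hδ₀ : 0 < δ₀) (hd11 : ∀ x, δ₀ ≤ D x ⟨0, by omega⟩ ⟨0, by omega⟩)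
    (w : Fin m → X → ℝ) (M C : ℝ)
    (hw1 : ∀ x, |w ⟨0, by omega⟩ x| ≤ M)
    (hsum : ∀ i x, |∑ j ∈ Finset.univ.filter (fun j => j ≠ ⟨0, by omega⟩), D x i j * w j x| ≤ C) :
    ∃ C' : ℝ, ∀ x, ∃ j : Fin m, j ≠ ⟨0, by omega⟩ ∧ |w j x| ≤ C' := by
  set z : Fin m := ⟨0, by omega⟩ with hz
  -- the index type of the submatrix
  let s := {j : Fin m // j ≠ z}
  haveI : Fintype s := inferInstance
  let B : X → Matrix s s ℝ := fun x => (D x).submatrix Subtype.val Subtype.val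
  -- key: subtype sums equal filtered sums
  have hsub : ∀ (f : Fin m → ℝ),
      ∑ k : s, f k.1 = ∑ k ∈ Finset.univ.filter (fun j => j ≠ z), f k := by
    intro f
    exact (Finset.sum_subtype (Finset.univ.filter (fun j => j ≠ z))
      (fun k => by simp) f).symm
  -- B x is invertible
  have hker : ∀ x (v : s → ℝ), (B x).mulVec v = 0 → v = 0 := by
    intro x v hv
    set u : Fin m → ℝ := fun j => if h : j = z then 0 else v ⟨j, h⟩ with hu
    have hu0 : u z = 0 := by simp [hu]
    have heq : ∀ i, i ≠ z → ∑ k, D x i k * u k = 0 := by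
      intro i hi
      have h1 : ∑ k, D x i k * u k
          = ∑ k ∈ Finset.univ.filter (fun j => j ≠ z), D x i k * u k := by
        rw [Finset.sum_filter]
        refine Finset.sum_congr rfl (fun k _ => ?_)
        rcases eq_or_ne k z with rfl | hk
        · simp [hu0]
        · simp [hk]
      have h2 : ∑ k ∈ Finset.univ.filter (fun j => j ≠ z), D x i k * u k
          = ∑ k : s, D x i k.1 * u k.1 := (hsub fun k => D x i k * u k).symm
      have h3 : ∑ k : s, D x i k.1 * u k.1 = ((B x).mulVec v) ⟨i, hi⟩ := by
        refine Finset.sum_congr rfl (fun k _ => ?_)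
        simp [hu, k.2, B, Matrix.mulVec, dotProduct]
      rw [h1, h2, h3, hv]
      rfl
    have hle := maxprin (D x) (hoff x) (hrow x) (hirr x) z u hu0 heq
    have heq' : ∀ i, i ≠ z → ∑ k, D x i k * (-u) k = 0 := by
      intro i hi
      have h4 : ∑ k, D x i k * (-u) k = -∑ k, D x i k * u k := by
        simp [mul_neg]
      rw [h4, heq i hi, neg_zero]
    have hge := maxprin (D x) (hoff x) (hrow x) (hirr x) z (-u)
      (by simp [hu0]) heq'
    funext j
    have h1 : u j.1 ≤ 0 := hle j.1
    have h2 : 0 ≤ u j.1 := by have := hge j.1; simpa using this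
    have h3 : u j.1 = 0 := le_antisymm h1 h2
    have : u j.1 = v j := by simp [hu, j.2]
    rw [← this, h3]; rfl
  have hunit : ∀ x, IsUnit (B x) := by
    intro x
    rw [← Matrix.mulVec_injective_iff_isUnit]
    intro v₁ v₂ h
    have : (B x).mulVec (v₁ - v₂) = 0 := by
      rw [Matrix.mulVec_sub, h, sub_self]
    have := hker x _ this
    exact sub_eq_zero.mp this
  have hdet : ∀ x, (B x).det ≠ 0 := fun x =>
    IsUnit.ne_zero ((Matrix.isUnit_iff_isUnit_det _).mp (hunit x))
  -- continuity of the inverse entries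
  have hBcont : Continuous B :=
    continuous_matrix (fun i j => hDcont i.1 j.1)
  have hinvcont : ∀ j k : s, Continuous fun x => (B x)⁻¹ j k := by
    intro j k
    have h1 : Continuous fun x => ((B x).det)⁻¹ :=
      (hBcont.matrix_det).inv₀ hdet
    have h2 : Continuous fun x => (B x).adjugate j k :=
      (continuous_apply k).comp ((continuous_apply j).comp hBcont.matrix_adjugate)
    have : (fun x => (B x)⁻¹ j k) = fun x => ((B x).det)⁻¹ * (B x).adjugate j k := by
      funext x
      rw [Matrix.inv_def, Matrix.smul_apply, Ring.inverse_eq_inv, smul_eq_mul]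
    rw [this]
    exact h1.mul h2
  -- uniform bound on the inverse
  set g : X → ℝ := fun x => ∑ j : s, ∑ k : s, |(B x)⁻¹ j k| with hg
  have hgcont : Continuous g := by
    apply continuous_finset_sum
    intro j _
    exact continuous_finset_sum _ (fun k _ => (hinvcont j k).abs)
  obtain ⟨K, hK⟩ : ∃ K, ∀ x, g x ≤ K := by
    rcases isEmpty_or_nonempty X with hX | hX
    · exact ⟨0, fun x => (hX.false x).elim⟩
    · obtain ⟨K, hK⟩ := (isCompact_univ.image hgcont).bddAbove
      exact ⟨K, fun x => hK ⟨x, Set.mem_univ x, rfl⟩⟩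
  refine ⟨K * C, fun x => ?_⟩
  have hC : 0 ≤ C := le_trans (abs_nonneg _) (hsum z x)
  -- the index j = 1
  have h1z : (⟨1, by omega⟩ : Fin m) ≠ z := by
    simp [hz, Fin.ext_iff]
  set j1 : s := ⟨⟨1, by omega⟩, h1z⟩ with hj1
  refine ⟨j1.1, j1.2, ?_⟩
  set v : s → ℝ := fun j => w j.1 x with hv
  set b : s → ℝ := fun i =>
    ∑ j ∈ Finset.univ.filter (fun j => j ≠ z), D x i.1 j * w j x with hb
  have hBv : (B x).mulVec v = b := by
    funext i
    show ∑ k : s, D x i.1 k.1 * v k = b i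
    exact hsub fun k => D x i.1 k * w k x
  have hbC : ∀ i : s, |b i| ≤ C := fun i => hsum i.1 x
  have hvinv : v = (B x)⁻¹.mulVec b := by
    rw [← hBv, Matrix.mulVec_mulVec,
      Matrix.nonsing_inv_mul _ ((Matrix.isUnit_iff_isUnit_det _).mp (hunit x)),
      Matrix.one_mulVec]
  have : |v j1| ≤ g x * C := by
    rw [hvinv]
    calc |∑ k : s, (B x)⁻¹ j1 k * b k| ≤ ∑ k : s, |(B x)⁻¹ j1 k * b k| :=
          Finset.abs_sum_le_sum_abs _ _
      _ ≤ ∑ k : s, |(B x)⁻¹ j1 k| * C := by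
          refine Finset.sum_le_sum (fun k _ => ?_)
          rw [abs_mul]
          exact mul_le_mul_of_nonneg_left (hbC k) (abs_nonneg _)
      _ = (∑ k : s, |(B x)⁻¹ j1 k|) * C := by rw [Finset.sum_mul]
      _ ≤ g x * C := by
          refine mul_le_mul_of_nonneg_right ?_ hC
          exact Finset.single_le_sum
            (fun j _ => Finset.sum_nonneg (fun k _ => abs_nonneg ((B x)⁻¹ j k)))
            (Finset.mem_univ j1)
  calc |w j1.1 x| = |v j1| := rfl
    _ ≤ g x * C := this
    _ ≤ K * C := mul_le_mul_of_nonneg_right (hK x) hC
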